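/- Let f be a primitive polynomial of degree k over F₂ and let ℓ ≥ 1, with i = ⌈log₂ ℓ⌉. Consider the set A of binary sequences whose minimal zero polynomial is f^ℓ. Then A is invariant under the shift operator E, every sequence in A has least period (2^k − 1)·2^i, each orbit of A under iterates of E has exactly (2^k − 1)·2^i elements, and the number of such orbits is exactly 2^{(ℓ−1)k − i}. -/

import Mathlib

open Polynomial

noncomputable def polyApp (f : Polynomial (ZMod 2)) (s : ℕ → ZMod 2) : ℕ → ZMod 2 :=
  fun i => f.sum fun j c => c * s (i + j)

def HasPeriodDvd (s : ℕ → ZMod 2) (N : ℕ) : Prop := ∀ i, s (i + N) = s i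

def IsLeastPeriod (s : ℕ → ZMod 2) (e : ℕ) : Prop :=
  0 < e ∧ HasPeriodDvd s e ∧ ∀ m, 0 < m → HasPeriodDvd s m → e ≤ m

def IsMinZeroPoly (g : Polynomial (ZMod 2)) (s : ℕ → ZMod 2) : Prop :=
  g ≠ 0 ∧ polyApp g s = 0 ∧
    ∀ h : Polynomial (ZMod 2), h ≠ 0 → polyApp h s = 0 → g.natDegree ≤ h.natDegree

def IsExponent (f : Polynomial (ZMod 2)) (e : ℕ) : Prop :=
  0 < e ∧ f ∣ X ^ e - 1 ∧ ∀ m, 0 < m → f ∣ X ^ m - 1 → e ≤ m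

def IsPrimitivePoly (f : Polynomial (ZMod 2)) (k : ℕ) : Prop :=
  Irreducible f ∧ f.natDegree = k ∧ f.coeff 0 ≠ 0 ∧ IsExponent f (2 ^ k - 1)

/-- The shift operator on sequences. -/
def shiftE (s : ℕ → ZMod 2) : ℕ → ZMod 2 := fun i => s (i + 1)

/-- The orbit of a sequence under iterates of the shift operator. -/
def shiftOrbit (s : ℕ → ZMod 2) : Set (ℕ → ZMod 2) :=
  {t | ∃ j : ℕ, t = fun i => s (i + j)}

namespace AuxPP

abbrev Sq := ℕ → ZMod 2

def L : Module.End (ZMod 2) Sq where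
  toFun s := fun i => s (i+1)
  map_add' _ _ := rfl
  map_smul' _ _ := rfl

lemma L_pow (n : ℕ) : ∀ s : Sq, (L^n) s = fun i => s (i+n) := by
  induction n with
  | zero => intro s; funext i; rfl
  | succ m ih =>
    intro s
    rw [pow_succ]
    have h1 : (L ^ m * L) s = (L^m) (L s) := rfl
    rw [h1, ih]
    funext i
    show s (i + m + 1) = s (i + (m+1))
    congr 1

lemma polyApp_eq (g : Polynomial (ZMod 2)) (s : Sq) : polyApp g s = aeval L g s := by
  rw [aeval_eq_sum_range]
  funext i
  have : (∑ j ∈ Finset.range (g.natDegree + 1), g.coeff j • L ^ j) s i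
      = ∑ j ∈ Finset.range (g.natDegree + 1), g.coeff j * s (i + j) := by
    simp only [LinearMap.coe_sum, Finset.sum_apply, LinearMap.smul_apply, L_pow,
      Pi.smul_apply, smul_eq_mul]
  rw [this]
  show (g.sum fun j c => c * s (i + j)) = _
  exact Polynomial.sum_over_range (p := g) (f := fun j c => c * s (i + j))
    (fun n => zero_mul _)

lemma polyApp_mul (g h : Polynomial (ZMod 2)) (s : Sq) :
    polyApp (g * h) s = polyApp g (polyApp h s) := by
  simp only [polyApp_eq, map_mul]
  rfl

lemma polyApp_add (g h : Polynomial (ZMod 2)) (s : Sq) :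
    polyApp (g + h) s = polyApp g s + polyApp h s := by
  simp only [polyApp_eq, map_add]; rfl

lemma polyApp_zero_right (g : Polynomial (ZMod 2)) : polyApp g (0 : Sq) = 0 := by
  rw [polyApp_eq]; exact map_zero _

lemma polyApp_one (s : Sq) : polyApp 1 s = s := by
  rw [polyApp_eq, map_one]; rfl

lemma polyApp_X (s : Sq) : polyApp X s = fun i => s (i+1) := by
  rw [polyApp_eq, aeval_X]; rfl

lemma polyApp_X_pow (n : ℕ) (s : Sq) : polyApp (X^n) s = fun i => s (i+n) := by
  rw [polyApp_eq, map_pow, aeval_X, L_pow]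

-- multiples of annihilators annihilate
lemma ann_of_dvd {g h : Polynomial (ZMod 2)} {s : Sq} (hgs : polyApp g s = 0)
    (hdvd : g ∣ h) : polyApp h s = 0 := by
  obtain ⟨q, rfl⟩ := hdvd
  rw [mul_comm, polyApp_mul, hgs, polyApp_zero_right]

lemma gcd_ann {a b : Polynomial (ZMod 2)} {s : Sq} (ha : polyApp a s = 0)
    (hb : polyApp b s = 0) : polyApp (EuclideanDomain.gcd a b) s = 0 := by
  classical
  rw [EuclideanDomain.gcd_eq_gcd_ab, polyApp_add, mul_comm a, mul_comm b,
    polyApp_mul, polyApp_mul, ha, hb, polyApp_zero_right, polyApp_zero_right, add_zero]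


lemma zmod2_cases : ∀ a : ZMod 2, a = 0 ∨ a = 1 := by decide

lemma monic_of_ne_zero {g : Polynomial (ZMod 2)} (hg : g ≠ 0) : g.Monic := by
  have h := Polynomial.leadingCoeff_ne_zero.mpr hg
  rcases zmod2_cases g.leadingCoeff with h0 | h1
  · exact absurd h0 h
  · exact h1

lemma polyApp_apply_eq {g : Polynomial (ZMod 2)} (hg : g.Monic) (s : Sq) (n : ℕ) :
    polyApp g s n = (∑ j ∈ Finset.range g.natDegree, g.coeff j * s (n + j)) + s (n + g.natDegree) := by
  have h1 : polyApp g s n = ∑ j ∈ Finset.range (g.natDegree + 1), g.coeff j * s (n + j) :=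
    Polynomial.sum_over_range (p := g) (f := fun j c => c * s (n + j)) (fun m => zero_mul _)
  rw [h1, Finset.sum_range_succ, hg.coeff_natDegree, one_mul]

lemma add2_iff : ∀ a b : ZMod 2, (a + b = 0 ↔ b = a) := by decide

lemma mem_ker_iff_rec {g : Polynomial (ZMod 2)} (hg : g.Monic) (s : Sq) :
    polyApp g s = 0 ↔
      ∀ n, s (n + g.natDegree) = ∑ j ∈ Finset.range g.natDegree, g.coeff j * s (n + j) := by
  rw [funext_iff]
  refine forall_congr' fun n => ?_
  rw [polyApp_apply_eq hg, Pi.zero_apply, add2_iff]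

noncomputable def extSeq (g : Polynomial (ZMod 2)) (v : Fin g.natDegree → ZMod 2) : ℕ → ZMod 2
  | n =>
    if h : n < g.natDegree then v ⟨n, h⟩
    else ∑ j : Fin g.natDegree, g.coeff j * extSeq g v (n - g.natDegree + j)
  termination_by n => n
  decreasing_by unfold n at h; have h2 := j.isLt; omega

lemma extSeq_lt (g : Polynomial (ZMod 2)) (v : Fin g.natDegree → ZMod 2) (n : ℕ)
    (h : n < g.natDegree) : extSeq g v n = v ⟨n, h⟩ := by
  rw [extSeq, dif_pos h]

lemma extSeq_ge (g : Polynomial (ZMod 2)) (v : Fin g.natDegree → ZMod 2) (n : ℕ)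
    (h : g.natDegree ≤ n) :
    extSeq g v n = ∑ j : Fin g.natDegree, g.coeff j * extSeq g v (n - g.natDegree + j) := by
  rw [extSeq, dif_neg (by omega)]

lemma extSeq_mem {g : Polynomial (ZMod 2)} (hg : g.Monic) (v : Fin g.natDegree → ZMod 2) :
    polyApp g (extSeq g v) = 0 := by
  rw [mem_ker_iff_rec hg]
  intro n
  rw [extSeq_ge g v (n + g.natDegree) (Nat.le_add_left _ _)]
  rw [← Fin.sum_univ_eq_sum_range (fun j => g.coeff j * extSeq g v (n + j))]
  refine Finset.sum_congr rfl fun j _ => ?_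
  have heq : n + g.natDegree - g.natDegree + (j : ℕ) = n + (j : ℕ) := by omega
  rw [heq]

lemma ker_eq_ext {g : Polynomial (ZMod 2)} (hg : g.Monic) {s : Sq} (hs : polyApp g s = 0) :
    s = extSeq g (fun j => s j.1) := by
  funext n
  induction n using Nat.strong_induction_on with
  | _ n ih =>
    by_cases h : n < g.natDegree
    · rw [extSeq_lt g _ n h]
    · rw [extSeq_ge g _ n (le_of_not_gt h)]
      have hrec := (mem_ker_iff_rec hg s).mp hs (n - g.natDegree)
      have heq : n - g.natDegree + g.natDegree = n := by omega
      rw [heq] at hrec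
      rw [hrec, ← Fin.sum_univ_eq_sum_range (fun j => g.coeff j * s (n - g.natDegree + j))]
      refine Finset.sum_congr rfl fun j _ => ?_
      have hj := j.isLt
      rw [← ih (n - g.natDegree + (j : ℕ)) (by omega)]

def kerP (g : Polynomial (ZMod 2)) : Set Sq := {s | polyApp g s = 0}

noncomputable def kerEquiv {g : Polynomial (ZMod 2)} (hg : g.Monic) :
    kerP g ≃ (Fin g.natDegree → ZMod 2) where
  toFun s := fun j => s.1 j.1
  invFun v := ⟨extSeq g v, extSeq_mem hg v⟩
  left_inv s := Subtype.ext (ker_eq_ext hg s.2).symm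
  right_inv v := by
    funext j
    simp only
    rw [extSeq_lt g v j.1 j.isLt]

lemma ker_finite {g : Polynomial (ZMod 2)} (hg : g.Monic) : (kerP g).Finite := by
  rw [← Set.finite_coe_iff]
  exact Finite.of_equiv _ (kerEquiv hg).symm

lemma ker_ncard {g : Polynomial (ZMod 2)} (hg : g.Monic) :
    (kerP g).ncard = 2 ^ g.natDegree := by
  rw [← Nat.card_coe_set_eq, Nat.card_congr (kerEquiv hg)]
  simp [Nat.card_eq_fintype_card]


section Main

variable {f : Polynomial (ZMod 2)} {k ℓ : ℕ}

lemma prime_f (hf : IsPrimitivePoly f k) : Prime f :=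
  (UniqueFactorizationMonoid.irreducible_iff_prime).mp hf.1

lemma k_pos (hf : IsPrimitivePoly f k) : 1 ≤ k := by
  have h := hf.2.2.2.1
  by_contra hk
  interval_cases k <;> simp_all

lemma f_not_dvd_X (hf : IsPrimitivePoly f k) : ¬ f ∣ X := by
  intro h
  have hassoc : Associated f X := hf.1.associated_of_dvd Polynomial.irreducible_X h
  obtain ⟨u, hu⟩ := hassoc
  have h0 : (f * (u : Polynomial (ZMod 2))).coeff 0 = 0 := by
    rw [hu]; simp
  rw [Polynomial.mul_coeff_zero] at h0
  have hu0 : ((u : Polynomial (ZMod 2))).coeff 0 ≠ 0 := by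
    obtain ⟨r, hr, hCr⟩ := Polynomial.isUnit_iff.mp u.isUnit
    rw [← hCr, Polynomial.coeff_C]
    simpa using hr.ne_zero
  rcases mul_eq_zero.mp h0 with h' | h'
  · exact hf.2.2.1 h'
  · exact hu0 h'

lemma ann_dvd_of (hf : IsPrimitivePoly f k) (hℓ : 1 ≤ ℓ) {s : Sq}
    (hs : polyApp (f^ℓ) s = 0) (h1 : polyApp (f^(ℓ-1)) s ≠ 0)
    {h : Polynomial (ZMod 2)} (hann : polyApp h s = 0) : f^ℓ ∣ h := by
  classical
  have hg : polyApp (EuclideanDomain.gcd (f^ℓ) h) s = 0 := gcd_ann hs hann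
  have hgd : EuclideanDomain.gcd (f^ℓ) h ∣ f^ℓ := EuclideanDomain.gcd_dvd_left _ _
  obtain ⟨j, hjle, hassoc⟩ := (dvd_prime_pow (prime_f hf) ℓ).mp hgd
  have hfj : polyApp (f^j) s = 0 := ann_of_dvd hg hassoc.dvd
  have hj : j = ℓ := by
    by_contra hne
    exact h1 (ann_of_dvd hfj (pow_dvd_pow f (by omega)))
  subst hj
  exact (hassoc.symm.dvd).trans (EuclideanDomain.gcd_dvd_right _ _)

lemma mem_A_iff (hf : IsPrimitivePoly f k) (hℓ : 1 ≤ ℓ) (s : Sq) :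
    (s ≠ 0 ∧ IsMinZeroPoly (f^ℓ) s) ↔
      (polyApp (f^ℓ) s = 0 ∧ polyApp (f^(ℓ-1)) s ≠ 0) := by
  constructor
  · rintro ⟨hs0, _, hfl0, hmin⟩
    refine ⟨hfl0, fun hcontr => ?_⟩
    have hne : f^(ℓ-1) ≠ 0 := pow_ne_zero _ hf.1.ne_zero
    have hd := hmin _ hne hcontr
    rw [Polynomial.natDegree_pow, Polynomial.natDegree_pow, hf.2.1] at hd
    have hk := k_pos hf
    have : ℓ ≤ ℓ - 1 := Nat.le_of_mul_le_mul_right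
      (by rwa [mul_comm ℓ, mul_comm (ℓ-1)] at hd) (by omega)
    omega
  · rintro ⟨h0, h1⟩
    have hs0 : s ≠ 0 := fun h => h1 (by rw [h]; exact polyApp_zero_right _)
    refine ⟨hs0, pow_ne_zero _ hf.1.ne_zero, h0, fun h hne hann => ?_⟩
    exact Polynomial.natDegree_le_of_dvd (ann_dvd_of hf hℓ h0 h1 hann) hne

lemma polyApp_sub (g h : Polynomial (ZMod 2)) (s : Sq) :
    polyApp (g - h) s = polyApp g s - polyApp h s := by
  simp only [polyApp_eq, map_sub]; rfl

lemma polyApp_Xpow_sub_one (N : ℕ) (s : Sq) :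
    polyApp (X^N - 1) s = (fun i => s (i + N)) - s := by
  rw [polyApp_sub, polyApp_one, polyApp_X_pow]


lemma periodDvd_iff_ann (N : ℕ) (s : Sq) :
    HasPeriodDvd s N ↔ polyApp (X^N - 1) s = 0 := by
  rw [polyApp_Xpow_sub_one]
  constructor
  · intro hp; funext i; simp [hp i]
  · intro hz i
    have := congrFun hz i
    simpa [sub_eq_zero] using this

lemma pow_identity (e a : ℕ) :
    ((X^e - 1 : Polynomial (ZMod 2)))^(2^a) = X^(e * 2^a) - 1 := by
  rw [sub_pow_char_pow (X^e) 1 a, ← pow_mul, one_pow]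

lemma fact1 (hf : IsPrimitivePoly f k) (hℓ : 1 ≤ ℓ) :
    f^ℓ ∣ (X^((2^k - 1) * 2^(Nat.clog 2 ℓ)) - 1 : Polynomial (ZMod 2)) := by
  have h1 : f ∣ X^(2^k-1) - 1 := hf.2.2.2.2.1
  have hle : ℓ ≤ 2^(Nat.clog 2 ℓ) := Nat.le_pow_clog one_lt_two ℓ
  calc f^ℓ ∣ f^(2^(Nat.clog 2 ℓ)) := pow_dvd_pow f hle
    _ ∣ (X^(2^k-1) - 1)^(2^(Nat.clog 2 ℓ)) := pow_dvd_pow_of_dvd h1 _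
    _ = X^((2^k - 1) * 2^(Nat.clog 2 ℓ)) - 1 := pow_identity _ _

lemma not_sq_dvd (hf : IsPrimitivePoly f k) {b : ℕ} (hb : ¬ 2 ∣ b) (hb0 : 0 < b) :
    ¬ f^2 ∣ (X^b - 1 : Polynomial (ZMod 2)) := by
  intro hdvd
  obtain ⟨v, hv⟩ := hdvd
  have hder := congrArg Polynomial.derivative hv
  rw [Polynomial.derivative_sub, Polynomial.derivative_one, sub_zero,
    Polynomial.derivative_X_pow] at hder
  have hbcast : ((b : ℕ) : ZMod 2) = 1 := by
    have : b % 2 = 1 := Nat.odd_iff.mp (Nat.odd_iff.mpr (by omega))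
    rw [← Nat.mod_add_div b 2, this]
    push_cast
    rw [show (2 : ZMod 2) = 0 from rfl]
    ring
  rw [hbcast, map_one, one_mul, Polynomial.derivative_mul, Polynomial.derivative_pow] at hder
  rw [show (((2:ℕ)) : ZMod 2) = 0 by rfl] at hder
  rw [map_zero, zero_mul, zero_mul, zero_mul, zero_add] at hder
  have hdvdX : f ∣ X^(b-1) := ⟨f * Polynomial.derivative v, by rw [hder]; ring⟩
  by_cases hb1 : b = 1
  · subst hb1
    simp only [Nat.sub_self, pow_zero] at hdvdX
    exact hf.1.not_isUnit (isUnit_of_dvd_one hdvdX)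
  · exact f_not_dvd_X hf ((prime_f hf).dvd_of_dvd_pow hdvdX)

lemma min_exp (hf : IsPrimitivePoly f k) (hℓ : 1 ≤ ℓ) {m : ℕ} (hm : 0 < m)
    (hdvd : f^ℓ ∣ (X^m - 1 : Polynomial (ZMod 2))) :
    (2^k - 1) * 2^(Nat.clog 2 ℓ) ≤ m := by
  set a := m.factorization 2 with ha
  set b := m / 2^a with hbdef
  have hm0 : m ≠ 0 := hm.ne'
  have hb_odd : ¬ 2 ∣ b := Nat.not_dvd_ordCompl Nat.prime_two hm0
  have hfact : 2^a * b = m := Nat.ordProj_mul_ordCompl_eq_self m 2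
  have hb0 : 0 < b := Nat.ordCompl_pos 2 hm0
  have hxm : (X^m - 1 : Polynomial (ZMod 2)) = (X^b - 1)^(2^a) := by
    rw [pow_identity b a]
    congr 2
    rw [← hfact, Nat.mul_comm]
  rw [hxm] at hdvd
  have hfb : f ∣ X^b - 1 :=
    (prime_f hf).dvd_of_dvd_pow ((dvd_pow_self f (by omega : ℓ ≠ 0)).trans hdvd)
  obtain ⟨u, hu⟩ := hfb
  have hfu : ¬ f ∣ u := by
    intro hdu
    obtain ⟨w, hw⟩ := hdu
    exact not_sq_dvd hf hb_odd hb0 ⟨w, by rw [hu, hw]; ring⟩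
  have hmul : f^ℓ ∣ f^(2^a) * u^(2^a) := by
    rw [← mul_pow, ← hu]; exact hdvd
  have hll : f^ℓ ∣ f^(2^a) :=
    (prime_f hf).pow_dvd_of_dvd_mul_right ℓ
      (fun hdu => hfu ((prime_f hf).dvd_of_dvd_pow hdu)) hmul
  have hle : ℓ ≤ 2^a := (pow_dvd_pow_iff hf.1.ne_zero hf.1.not_isUnit).mp hll
  have hia : Nat.clog 2 ℓ ≤ a := (Nat.clog_le_iff_le_pow one_lt_two).mpr hle
  have heb : 2^k - 1 ≤ b := hf.2.2.2.2.2 b hb0 ⟨u, hu⟩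
  calc (2^k - 1) * 2^(Nat.clog 2 ℓ) ≤ b * 2^a :=
        Nat.mul_le_mul heb (Nat.pow_le_pow_right (by norm_num) hia)
    _ = m := by rw [mul_comm]; exact hfact

end Main

section Orbit

lemma period_mul {s : Sq} {N : ℕ} (hp : HasPeriodDvd s N) (c : ℕ) (x : ℕ) :
    s (x + c * N) = s x := by
  induction c with
  | zero => simp
  | succ c ih =>
    have h1 : x + (c + 1) * N = (x + c * N) + N := by ring
    rw [h1, hp, ih]

lemma shift_mod {s : Sq} {N : ℕ} (hp : HasPeriodDvd s N) (j : ℕ) :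
    (fun x => s (x + j)) = (fun x => s (x + j % N)) := by
  funext x
  conv_lhs => rw [← Nat.mod_add_div j N]
  have h1 : x + (j % N + N * (j / N)) = (x + j % N) + (j / N) * N := by ring
  rw [h1, period_mul hp]

lemma self_mem_orbit (s : Sq) : s ∈ shiftOrbit s := ⟨0, rfl⟩

lemma orbit_ncard {s : Sq} {N : ℕ} (hlp : IsLeastPeriod s N) :
    (shiftOrbit s).ncard = N := by
  classical
  obtain ⟨hN, hp, hmin⟩ := hlp
  have hinj : ∀ a b, a ≤ b → b < N → (fun x => s (x + a)) = (fun x => s (x + b)) → a = b := by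
    intro a b hab hb heq
    by_contra hne
    have haN : a ≤ a * N := Nat.le_mul_of_pos_right a hN
    have hper : HasPeriodDvd s (b - a) := by
      intro x
      have key := congrFun heq (x + a * N - a)
      have e1 : x + a * N - a + a = x + a * N := by omega
      have e2 : x + a * N - a + b = (x + (b - a)) + a * N := by omega
      rw [e1, e2] at key
      calc s (x + (b - a)) = s ((x + (b - a)) + a * N) := (period_mul hp a _).symm
        _ = s (x + a * N) := key.symm
        _ = s x := period_mul hp a x
    exact absurd (hmin _ (by omega) hper) (by omega)
  have hset : shiftOrbit s = ↑((Finset.range N).image (fun j => fun x => s (x + j))) := by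
    ext t
    simp only [Finset.coe_image, Finset.coe_range, Set.mem_image, Set.mem_Iio, shiftOrbit,
      Set.mem_setOf_eq]
    constructor
    · rintro ⟨j, rfl⟩
      exact ⟨j % N, Nat.mod_lt j hN, (shift_mod hp j).symm⟩
    · rintro ⟨j, _, rfl⟩
      exact ⟨j, rfl⟩
  rw [hset, Set.ncard_coe_finset, Finset.card_image_of_injOn, Finset.card_range]
  intro a ha b hb heq
  simp only [Finset.coe_range, Set.mem_Iio] at ha hb
  rcases le_total a b with h | h
  · exact hinj a b h hb heq
  · exact (hinj b a h ha heq.symm).symm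

lemma orbit_eq_of_mem {s t : Sq} {N : ℕ} (hN : 0 < N) (hp : HasPeriodDvd s N)
    (ht : t ∈ shiftOrbit s) : shiftOrbit t = shiftOrbit s := by
  obtain ⟨a, rfl⟩ := ht
  ext u
  constructor
  · rintro ⟨b, rfl⟩
    refine ⟨a + b, ?_⟩
    funext x
    show s (x + b + a) = s (x + (a + b))
    congr 1
    omega
  · rintro ⟨b, rfl⟩
    have haN : a ≤ a * N := Nat.le_mul_of_pos_right a hN
    refine ⟨b + a * N - a, ?_⟩
    funext x
    show s (x + b) = s (x + (b + a * N - a) + a)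
    have e : x + (b + a * N - a) + a = (x + b) + a * N := by omega
    rw [e, period_mul hp]

end Orbit

end AuxPP


theorem enumerate_sequences_of_primitive_power
    (f : Polynomial (ZMod 2)) (k : ℕ) (hf : IsPrimitivePoly f k)
    (ℓ : ℕ) (hℓ : 1 ≤ ℓ)
    (A : Set (ℕ → ZMod 2))
    (hA : A = {s | s ≠ 0 ∧ IsMinZeroPoly (f ^ ℓ) s}) :
    (∀ s ∈ A, shiftE s ∈ A) ∧
    (∀ s ∈ A, IsLeastPeriod s ((2 ^ k - 1) * 2 ^ (Nat.clog 2 ℓ))) ∧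
    (∀ s ∈ A, (shiftOrbit s).ncard = (2 ^ k - 1) * 2 ^ (Nat.clog 2 ℓ)) ∧
    {O : Set (ℕ → ZMod 2) | ∃ s ∈ A, O = shiftOrbit s}.ncard =
      2 ^ ((ℓ - 1) * k - Nat.clog 2 ℓ) := by
  classical
  have hk : 1 ≤ k := AuxPP.k_pos hf
  set ci := Nat.clog 2 ℓ with hci
  set N := (2 ^ k - 1) * 2 ^ ci with hNdef
  have h2k : 2 ≤ 2 ^ k := by
    calc 2 = 2 ^ 1 := (pow_one 2).symm
    _ ≤ 2 ^ k := Nat.pow_le_pow_right (by norm_num) hk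
  have hNpos : 0 < N := Nat.mul_pos (by omega) (Nat.pow_pos (by norm_num))
  have hmemA : ∀ s, s ∈ A ↔ (polyApp (f ^ ℓ) s = 0 ∧ polyApp (f ^ (ℓ - 1)) s ≠ 0) := by
    intro s
    rw [hA]
    exact AuxPP.mem_A_iff hf hℓ s
  have part1 : ∀ s ∈ A, shiftE s ∈ A := by
    intro s hs
    rw [hmemA] at hs ⊢
    obtain ⟨h0, h1⟩ := hs
    have hshift : shiftE s = polyApp X s := by
      rw [AuxPP.polyApp_X]
      rfl
    constructor
    · rw [hshift, ← AuxPP.polyApp_mul, mul_comm, AuxPP.polyApp_mul, h0, AuxPP.polyApp_zero_right]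
    · intro hc
      rw [hshift, ← AuxPP.polyApp_mul] at hc
      have hdvd : f ^ ℓ ∣ f ^ (ℓ - 1) * X := AuxPP.ann_dvd_of hf hℓ h0 h1 hc
      have h2 : f ^ ℓ ∣ f ^ (ℓ - 1) :=
        (AuxPP.prime_f hf).pow_dvd_of_dvd_mul_right ℓ (AuxPP.f_not_dvd_X hf) hdvd
      have h3 : ℓ ≤ ℓ - 1 := (pow_dvd_pow_iff hf.1.ne_zero hf.1.not_isUnit).mp h2
      omega
  have part2 : ∀ s ∈ A, IsLeastPeriod s N := by
    intro s hs
    rw [hmemA] at hs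
    obtain ⟨h0, h1⟩ := hs
    have hiff : ∀ M, HasPeriodDvd s M ↔ f ^ ℓ ∣ (X ^ M - 1 : Polynomial (ZMod 2)) := by
      intro M
      rw [AuxPP.periodDvd_iff_ann]
      constructor
      · exact fun hz => AuxPP.ann_dvd_of hf hℓ h0 h1 hz
      · exact fun hd => AuxPP.ann_of_dvd h0 hd
    exact ⟨hNpos, (hiff N).mpr (AuxPP.fact1 hf hℓ),
      fun m hm hp => AuxPP.min_exp hf hℓ hm ((hiff m).mp hp)⟩
  have part3 : ∀ s ∈ A, (shiftOrbit s).ncard = N := fun s hs => AuxPP.orbit_ncard (part2 s hs)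
  have horbsub : ∀ s ∈ A, shiftOrbit s ⊆ A := by
    intro s hs t ht
    obtain ⟨j, rfl⟩ := ht
    induction j with
    | zero => exact hs
    | succ j ih =>
      have heq : (fun x => s (x + (j + 1))) = shiftE (fun x => s (x + j)) := by
        funext x
        show s (x + (j + 1)) = s (x + 1 + j)
        congr 1
        omega
      rw [heq]
      exact part1 _ ih
  refine ⟨part1, part2, part3, ?_⟩
  have hker_sub : AuxPP.kerP (f ^ (ℓ - 1)) ⊆ AuxPP.kerP (f ^ ℓ) :=
    fun s hs => AuxPP.ann_of_dvd hs (pow_dvd_pow f (by omega))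
  have hmonicl : (f ^ ℓ).Monic := AuxPP.monic_of_ne_zero (pow_ne_zero _ hf.1.ne_zero)
  have hmonicl1 : (f ^ (ℓ - 1)).Monic := AuxPP.monic_of_ne_zero (pow_ne_zero _ hf.1.ne_zero)
  have hAset : A = AuxPP.kerP (f ^ ℓ) \ AuxPP.kerP (f ^ (ℓ - 1)) := by
    ext s
    rw [hmemA, Set.mem_diff]
    exact Iff.rfl
  have hfinA : A.Finite := by
    rw [hAset]
    exact (AuxPP.ker_finite hmonicl).subset Set.diff_subset
  have hcardA : A.ncard = 2 ^ (ℓ * k) - 2 ^ ((ℓ - 1) * k) := by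
    rw [hAset, Set.ncard_diff hker_sub (AuxPP.ker_finite hmonicl1),
      AuxPP.ker_ncard hmonicl, AuxPP.ker_ncard hmonicl1,
      Polynomial.natDegree_pow, Polynomial.natDegree_pow, hf.2.1]
  set FA := hfinA.toFinset with hFAdef
  have hmemFA : ∀ s, s ∈ FA ↔ s ∈ A := fun s => hfinA.mem_toFinset
  set img := FA.image shiftOrbit with himgdef
  have hcount : FA.card = ∑ O ∈ img, (FA.filter (fun a => shiftOrbit a = O)).card :=
    Finset.card_eq_sum_card_fiberwise (fun x hx => Finset.mem_image_of_mem _ hx)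
  have hfiber : ∀ O ∈ img, (FA.filter (fun a => shiftOrbit a = O)).card = N := by
    intro O hO
    obtain ⟨s, hsFA, rfl⟩ := Finset.mem_image.mp hO
    have hsA : s ∈ A := (hmemFA s).mp hsFA
    have hOsub : shiftOrbit s ⊆ A := horbsub s hsA
    have hset : ((FA.filter (fun a => shiftOrbit a = shiftOrbit s)) : Set (ℕ → ZMod 2))
        = shiftOrbit s := by
      ext t
      simp only [Finset.coe_filter, Set.mem_setOf_eq, hmemFA]
      constructor
      · rintro ⟨htA, hts⟩
        have hmem : t ∈ shiftOrbit t := AuxPP.self_mem_orbit t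
        rwa [hts] at hmem
      · intro hts
        refine ⟨hOsub hts, ?_⟩
        exact AuxPP.orbit_eq_of_mem hNpos (part2 s hsA).2.1 hts
    have hcg := congrArg Set.ncard hset
    rw [Set.ncard_coe_finset] at hcg
    rw [hcg]
    exact part3 s hsA
  have hcard2 : FA.card = img.card * N := by
    rw [hcount, Finset.sum_congr rfl hfiber, Finset.sum_const, smul_eq_mul]
  have hOrbs : {O : Set (ℕ → ZMod 2) | ∃ s ∈ A, O = shiftOrbit s} = ↑img := by
    ext O
    simp only [Set.mem_setOf_eq, himgdef, Finset.coe_image, Set.mem_image, Finset.mem_coe,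
      hmemFA]
    constructor
    · rintro ⟨s, hsA, rfl⟩
      exact ⟨s, hsA, rfl⟩
    · rintro ⟨s, hsA, rfl⟩
      exact ⟨s, hsA, rfl⟩
  have hFAcard : FA.card = 2 ^ (ℓ * k) - 2 ^ ((ℓ - 1) * k) := by
    rw [← hcardA, ← Set.ncard_coe_finset, hFAdef, hfinA.coe_toFinset]
  have hclogle : ci ≤ ℓ - 1 := by
    rw [hci]
    refine (Nat.clog_le_iff_le_pow one_lt_two).mpr ?_
    have := Nat.lt_two_pow_self (n := ℓ - 1)
    omega
  have hile : ci ≤ (ℓ - 1) * k := hclogle.trans (Nat.le_mul_of_pos_right _ hk)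
  have hlk : ℓ * k = (ℓ - 1) * k + k := by
    have h := Nat.sub_add_cancel hℓ
    calc ℓ * k = ((ℓ - 1) + 1) * k := by rw [h]
    _ = (ℓ - 1) * k + k := by ring
  have harith : 2 ^ (ℓ * k) - 2 ^ ((ℓ - 1) * k) = 2 ^ ((ℓ - 1) * k - ci) * N := by
    have e2 : (2 : ℕ) ^ ((ℓ - 1) * k) = 2 ^ ((ℓ - 1) * k - ci) * 2 ^ ci := by
      rw [← pow_add]
      congr 1
      omega
    calc 2 ^ (ℓ * k) - 2 ^ ((ℓ - 1) * k)
        = 2 ^ ((ℓ - 1) * k) * 2 ^ k - 2 ^ ((ℓ - 1) * k) * 1 := by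
          rw [hlk, pow_add, mul_one]
      _ = 2 ^ ((ℓ - 1) * k) * (2 ^ k - 1) := by rw [Nat.mul_sub]
      _ = (2 ^ ((ℓ - 1) * k - ci) * 2 ^ ci) * (2 ^ k - 1) := by rw [← e2]
      _ = 2 ^ ((ℓ - 1) * k - ci) * ((2 ^ k - 1) * 2 ^ ci) := by ring
  have hfinal : img.card * N = 2 ^ ((ℓ - 1) * k - ci) * N := by
    rw [← hcard2, hFAcard, harith]
  rw [hOrbs, Set.ncard_coe_finset]
  exact Nat.eq_of_mul_eq_mul_right hNpos hfinal
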